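/- Let A be an invertible 2×2 complex matrix with |det A| = 1. Then there exist 2×2 unitary complex matrices U and V such that U† A V is upper triangular with both diagonal entries equal to 1. -/

import Mathlib

open Matrix

open Complex in
/-- Auxiliary function for the intermediate value argument. -/
noncomputable def gmdAux (a b c d x0 x1 u0 u1 : ℂ) (t : ℝ) : ℝ :=
  (normSq (a*(((1-t:ℝ):ℂ)*x0 + (t:ℂ)*u0) + b*(((1-t:ℝ):ℂ)*x1 + (t:ℂ)*u1)) +
   normSq (c*(((1-t:ℝ):ℂ)*x0 + (t:ℂ)*u0) + d*(((1-t:ℝ):ℂ)*x1 + (t:ℂ)*u1))) -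
  (normSq (((1-t:ℝ):ℂ)*x0 + (t:ℂ)*u0) + normSq (((1-t:ℝ):ℂ)*x1 + (t:ℂ)*u1))

open Complex in
lemma gmdAux_cont (a b c d x0 x1 u0 u1 : ℂ) :
    Continuous (gmdAux a b c d x0 x1 u0 u1) := by
  unfold gmdAux
  have hc : ∀ (z w : ℂ), Continuous (fun t : ℝ => ((1-t:ℝ):ℂ)*z + (t:ℂ)*w) :=
    fun z w => by fun_prop
  exact (((Complex.continuous_normSq.comp (by fun_prop :
      Continuous (fun t : ℝ => a*(((1-t:ℝ):ℂ)*x0 + (t:ℂ)*u0) + b*(((1-t:ℝ):ℂ)*x1 + (t:ℂ)*u1)))).add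
    (Complex.continuous_normSq.comp (by fun_prop :
      Continuous (fun t : ℝ => c*(((1-t:ℝ):ℂ)*x0 + (t:ℂ)*u0) + d*(((1-t:ℝ):ℂ)*x1 + (t:ℂ)*u1))))).sub
    ((Complex.continuous_normSq.comp (hc x0 u0)).add
      (Complex.continuous_normSq.comp (hc x1 u1))))

open Complex in
/-- If `|ad - bc| = 1`, there is a unit vector `(v0, v1)` whose image under
`!![a, b; c, d]` is again a unit vector. -/
lemma exists_unit_vec (a b c d : ℂ) (h : normSq (a*d - b*c) = 1) :
    ∃ v0 v1 : ℂ, normSq v0 + normSq v1 = 1 ∧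
      normSq (a*v0+b*v1) + normSq (c*v0+d*v1) = 1 := by
  -- Lagrange identities (Cauchy–Schwarz with equality defect)
  have lag1 : (normSq a + normSq c) * (normSq b + normSq d)
      = normSq (a*d - b*c) + normSq ((starRingEnd ℂ) a * b + (starRingEnd ℂ) c * d) := by
    simp only [Complex.normSq_apply, Complex.mul_re, Complex.mul_im, Complex.add_re,
      Complex.add_im, Complex.sub_re, Complex.sub_im, Complex.conj_re, Complex.conj_im]
    ring
  have lag2 : (normSq d + normSq c) * (normSq b + normSq a)
      = normSq (a*d - b*c) + normSq ((starRingEnd ℂ) d * b + (starRingEnd ℂ) c * a) := by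
    simp only [Complex.normSq_apply, Complex.mul_re, Complex.mul_im, Complex.add_re,
      Complex.add_im, Complex.sub_re, Complex.sub_im, Complex.conj_re, Complex.conj_im]
    ring
  -- a unit vector on which the image norm is ≥ 1
  obtain ⟨x0, x1, hx, hFx⟩ : ∃ x0 x1 : ℂ, normSq x0 + normSq x1 = 1 ∧
      1 ≤ normSq (a*x0+b*x1) + normSq (c*x0+d*x1) := by
    by_cases h1 : 1 ≤ normSq a + normSq c
    · exact ⟨1, 0, by simp, by simpa using h1⟩
    · have hbd : 1 ≤ normSq b + normSq d := by
        nlinarith [lag1, h, normSq_nonneg a, normSq_nonneg c, normSq_nonneg b, normSq_nonneg d,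
          normSq_nonneg ((starRingEnd ℂ) a * b + (starRingEnd ℂ) c * d)]
      exact ⟨0, 1, by simp, by simpa using hbd⟩
  -- a vector of norm ≥ 1 whose image is a unit vector
  obtain ⟨u0, u1, hu, hFu⟩ : ∃ u0 u1 : ℂ, 1 ≤ normSq u0 + normSq u1 ∧
      normSq (a*u0+b*u1) + normSq (c*u0+d*u1) = 1 := by
    by_cases h1 : 1 ≤ normSq d + normSq c
    · refine ⟨d, -c, by simpa using h1, ?_⟩
      have e1 : a*d + b*(-c) = a*d - b*c := by ring
      have e2 : c*d + d*(-c) = 0 := by ring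
      rw [e1, e2]; simpa using h
    · refine ⟨-b, a, ?_, ?_⟩
      · simp only [normSq_neg]
        nlinarith [lag2, h, normSq_nonneg a, normSq_nonneg b, normSq_nonneg c, normSq_nonneg d,
          normSq_nonneg ((starRingEnd ℂ) d * b + (starRingEnd ℂ) c * a)]
      · have e1 : a*(-b) + b*a = 0 := by ring
        have e2 : c*(-b) + d*a = a*d - b*c := by ring
        rw [e1, e2]; simpa using h
  -- fix the sign of the inner product
  obtain ⟨u0, u1, ⟨hu, hFu⟩, hr⟩ : ∃ u0 u1 : ℂ, (1 ≤ normSq u0 + normSq u1 ∧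
      normSq (a*u0+b*u1) + normSq (c*u0+d*u1) = 1) ∧
      0 ≤ ((starRingEnd ℂ) x0 * u0 + (starRingEnd ℂ) x1 * u1).re := by
    rcases le_or_gt 0 ((starRingEnd ℂ) x0 * u0 + (starRingEnd ℂ) x1 * u1).re with hr | hr
    · exact ⟨u0, u1, ⟨hu, hFu⟩, hr⟩
    · refine ⟨-u0, -u1, ⟨by simpa using hu, ?_⟩, ?_⟩
      · have e1 : a*(-u0) + b*(-u1) = -(a*u0+b*u1) := by ring
        have e2 : c*(-u0) + d*(-u1) = -(c*u0+d*u1) := by ring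
        rw [e1, e2, normSq_neg, normSq_neg]; exact hFu
      · have : (starRingEnd ℂ) x0 * -u0 + (starRingEnd ℂ) x1 * -u1
            = -((starRingEnd ℂ) x0 * u0 + (starRingEnd ℂ) x1 * u1) := by ring
        rw [this, neg_re]; linarith
  -- intermediate value theorem along the segment between the two vectors
  have h0 : 0 ≤ gmdAux a b c d x0 x1 u0 u1 0 := by
    simp only [gmdAux]; push_cast; simp only [sub_zero, one_mul, zero_mul, add_zero]
    norm_num
    linarith [hx, hFx]
  have h1 : gmdAux a b c d x0 x1 u0 u1 1 ≤ 0 := by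
    simp only [gmdAux]; push_cast; simp only [sub_self, zero_mul, one_mul, zero_add]
    norm_num
    linarith [hu, hFu]
  have himg := intermediate_value_Icc' (zero_le_one)
    ((gmdAux_cont a b c d x0 x1 u0 u1).continuousOn)
    (Set.mem_Icc.2 ⟨h1, h0⟩)
  obtain ⟨t, ht, hgt⟩ := himg
  set p0 : ℂ := ((1-t:ℝ):ℂ)*x0 + (t:ℂ)*u0 with hp0
  set p1 : ℂ := ((1-t:ℝ):ℂ)*x1 + (t:ℂ)*u1 with hp1
  have hgt' : normSq (a*p0+b*p1) + normSq (c*p0+d*p1)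
      = normSq p0 + normSq p1 := by
    have := hgt
    simp only [gmdAux, hp0, hp1] at this ⊢
    linarith
  set n : ℝ := normSq p0 + normSq p1 with hn
  have hnpos : (1:ℝ)/2 ≤ n := by
    have expand : n = (1-t)^2 * (normSq x0 + normSq x1)
        + t^2 * (normSq u0 + normSq u1)
        + 2*t*(1-t) * ((starRingEnd ℂ) x0 * u0 + (starRingEnd ℂ) x1 * u1).re := by
      simp only [hn, hp0, hp1, Complex.normSq_apply, Complex.mul_re, Complex.mul_im,
        Complex.add_re, Complex.add_im, Complex.ofReal_re, Complex.ofReal_im,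
        Complex.conj_re, Complex.conj_im]
      ring
    have ht0 : 0 ≤ t := ht.1
    have ht1 : t ≤ 1 := ht.2
    nlinarith [sq_nonneg (1-2*t), mul_nonneg (sq_nonneg t) (sub_nonneg.2 hu),
      mul_nonneg (mul_nonneg (mul_nonneg (by norm_num : (0:ℝ) ≤ 2) ht0)
        (by linarith : (0:ℝ) ≤ 1-t)) hr]
  have hn0 : 0 < n := by linarith
  set s : ℝ := (Real.sqrt n)⁻¹ with hs
  have hss : s * s * n = 1 := by
    rw [hs, ← mul_inv, Real.mul_self_sqrt hn0.le]
    exact inv_mul_cancel₀ (ne_of_gt hn0)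
  refine ⟨(s:ℂ)*p0, (s:ℂ)*p1, ?_, ?_⟩
  · rw [normSq_mul, normSq_mul, Complex.normSq_ofReal, ← mul_add]
    rw [← hn]; exact hss
  · have e1 : a*((s:ℂ)*p0) + b*((s:ℂ)*p1) = (s:ℂ)*(a*p0+b*p1) := by ring
    have e2 : c*((s:ℂ)*p0) + d*((s:ℂ)*p1) = (s:ℂ)*(c*p0+d*p1) := by ring
    rw [e1, e2, normSq_mul, normSq_mul, Complex.normSq_ofReal, ← mul_add, hgt']
    exact hss

/-- 1-GMD of a `2 × 2` matrix of unit determinant magnitude: if `A` is invertible and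
`|det A| = 1`, then there are `2 × 2` unitary matrices `U`, `V` such that `Uᴴ A V` is
upper triangular with both diagonal entries equal to `1`. -/
theorem gmd_two_unit_det (A : Matrix (Fin 2) (Fin 2) ℂ)
    (hA : IsUnit A.det) (hdet : ‖A.det‖ = 1) :
    ∃ U V : Matrix (Fin 2) (Fin 2) ℂ,
      Uᴴ * U = 1 ∧ Vᴴ * V = 1 ∧
      (Uᴴ * A * V) 1 0 = 0 ∧ (Uᴴ * A * V) 0 0 = 1 ∧ (Uᴴ * A * V) 1 1 = 1 := by
  have hδ1 : Complex.normSq (A 0 0 * A 1 1 - A 0 1 * A 1 0) = 1 := by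
    rw [← Matrix.det_fin_two, ← Complex.sq_norm, hdet]; norm_num
  obtain ⟨v0, v1, hv, hw⟩ := exists_unit_vec (A 0 0) (A 0 1) (A 1 0) (A 1 1) hδ1
  have hvC : (starRingEnd ℂ) v0 * v0 + (starRingEnd ℂ) v1 * v1 = 1 := by
    rw [mul_comm, mul_comm ((starRingEnd ℂ) v1), Complex.mul_conj, Complex.mul_conj,
      ← Complex.ofReal_add, hv, Complex.ofReal_one]
  set w0 := A 0 0 * v0 + A 0 1 * v1 with hw0
  set w1 := A 1 0 * v0 + A 1 1 * v1 with hw1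
  have hwC : (starRingEnd ℂ) w0 * w0 + (starRingEnd ℂ) w1 * w1 = 1 := by
    rw [mul_comm, mul_comm ((starRingEnd ℂ) w1), Complex.mul_conj, Complex.mul_conj,
      ← Complex.ofReal_add, hw, Complex.ofReal_one]
  have hδδ : (starRingEnd ℂ) (A 0 0 * A 1 1 - A 0 1 * A 1 0)
      * (A 0 0 * A 1 1 - A 0 1 * A 1 0) = 1 := by
    rw [mul_comm, Complex.mul_conj, hδ1, Complex.ofReal_one]
  simp only [_root_.map_mul, _root_.map_sub] at hδδ
  refine ⟨!![w0, -(starRingEnd ℂ) w1; w1, (starRingEnd ℂ) w0],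
    !![v0, -((starRingEnd ℂ) v1 * ((starRingEnd ℂ) (A 0 0) * (starRingEnd ℂ) (A 1 1)
          - (starRingEnd ℂ) (A 0 1) * (starRingEnd ℂ) (A 1 0)));
       v1, (starRingEnd ℂ) v0 * ((starRingEnd ℂ) (A 0 0) * (starRingEnd ℂ) (A 1 1)
          - (starRingEnd ℂ) (A 0 1) * (starRingEnd ℂ) (A 1 0))], ?_, ?_, ?_, ?_, ?_⟩
  · ext i j
    fin_cases i <;> fin_cases j <;>
      simp [Matrix.mul_apply, Fin.sum_univ_two, Matrix.conjTranspose_apply,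
        Matrix.one_apply, _root_.map_mul, _root_.map_sub, _root_.map_add] <;>
      first
        | linear_combination hwC
        | ring
  · ext i j
    fin_cases i <;> fin_cases j <;>
      simp [Matrix.mul_apply, Fin.sum_univ_two, Matrix.conjTranspose_apply,
        Matrix.one_apply, _root_.map_mul, _root_.map_sub, _root_.map_add] <;>
      first
        | linear_combination hvC
        | linear_combination ((starRingEnd ℂ) (A 0 0) * (starRingEnd ℂ) (A 1 1)
            - (starRingEnd ℂ) (A 0 1) * (starRingEnd ℂ) (A 1 0))
            * (A 0 0 * A 1 1 - A 0 1 * A 1 0) * hvC + hδδ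
        | ring
  · simp only [Matrix.mul_apply, Fin.sum_univ_two, Matrix.conjTranspose_apply]
    simp [_root_.map_mul, _root_.map_sub, _root_.map_add]
    rw [hw0, hw1]; ring
  · simp only [Matrix.mul_apply, Fin.sum_univ_two, Matrix.conjTranspose_apply]
    simp [_root_.map_mul, _root_.map_sub, _root_.map_add]
    linear_combination hwC - (starRingEnd ℂ) w0 * hw0 - (starRingEnd ℂ) w1 * hw1
  · simp only [Matrix.mul_apply, Fin.sum_univ_two, Matrix.conjTranspose_apply]
    simp [_root_.map_mul, _root_.map_sub, _root_.map_add]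
    rw [hw0, hw1]
    linear_combination ((starRingEnd ℂ) (A 0 0) * (starRingEnd ℂ) (A 1 1)
        - (starRingEnd ℂ) (A 0 1) * (starRingEnd ℂ) (A 1 0))
        * (A 0 0 * A 1 1 - A 0 1 * A 1 0) * hvC + hδδ
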